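/- Let T be the tree on 2×2 generated by a frame, with body ⌈T⌉ ⊆ 2^ω × 2^ω. Then ⌈T⌉ ∩ 𝔼_0 is not separable from ⌈T⌉ ∖ 𝔼_0 by a pot(Π^0_2) set, where 𝔼_0 := {(α,β) ∈ 2^ω × 2^ω : ∃m ∈ ω ∀n > m, α(n) = β(n)}. -/

import Mathlib

open Set Function

abbrev Cantor : Type := ℕ → Bool
abbrev Baire : Type := ℕ → ℕ

abbrev SetClass : Type 1 := (Z : Type) → TopologicalSpace Z → Set Z → Prop

/-- `S` is a Borel subset of `Z`. -/
def IsBorel {Z : Type} [TopologicalSpace Z] (S : Set Z) : Prop :=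
  @MeasurableSet Z (borel Z) S

/-- the inverse `A⁻¹` of a relation. -/
def relInv {X : Type} (A : Set (X × X)) : Set (X × X) := {p | (p.2, p.1) ∈ A}

/-- the symmetrization `s(A) = A ∪ A⁻¹` of a relation. -/
def symmRel {X : Type} (A : Set (X × X)) : Set (X × X) := A ∪ relInv A

def IsIrreflRel {X : Type} (A : Set (X × X)) : Prop := ∀ x : X, (x, x) ∉ A

def IsAntisymmRel {X : Type} (A : Set (X × X)) : Prop :=
  ∀ x y : X, (x, y) ∈ A → (y, x) ∈ A → x = y

/-- an oriented graph is an irreflexive antisymmetric relation. -/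
def IsOrientedGraph {X : Type} (A : Set (X × X)) : Prop := IsIrreflRel A ∧ IsAntisymmRel A

/-- a relation is acyclic if there is no injective sequence `(x_i)_{i ≤ n}` with `n ≥ 2`,
`(x_i, x_{i+1}) ∈ A` for `i < n` and `(x_n, x_0) ∈ A`. -/
def AcyclicRel {X : Type} (A : Set (X × X)) : Prop :=
  ¬ ∃ (n : ℕ) (x : ℕ → X), 2 ≤ n ∧ (∀ i j, i ≤ n → j ≤ n → x i = x j → i = j) ∧
      (∀ i, i < n → (x i, x (i + 1)) ∈ A) ∧ (x n, x 0) ∈ A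

/-- `A` is s-acyclic if `s(A)` is acyclic. -/
def SAcyclic {X : Type} (A : Set (X × X)) : Prop := AcyclicRel (symmRel A)

/-- a set is locally countable if all of its vertical and horizontal sections are countable. -/
def LocallyCountable {X Y : Type} (A : Set (X × Y)) : Prop :=
  (∀ x : X, {y : Y | (x, y) ∈ A}.Countable) ∧ (∀ y : Y, {x : X | (x, y) ∈ A}.Countable)

/-- a space is zero-dimensional if it has a neighborhood basis of clopen sets. -/
def ZeroDimensional (Z : Type) [TopologicalSpace Z] : Prop :=
  ∀ x : Z, ∀ U ∈ nhds x, ∃ V : Set Z, IsClopen V ∧ x ∈ V ∧ V ⊆ U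

/-- `B ⊆ X × Y` is potentially in the class `Γ`: there are finer Polish topologies on `X` and
on `Y` for which `B` belongs to `Γ` computed in the corresponding product space. -/
def Potentially (Γ : SetClass) {X Y : Type} [tX : TopologicalSpace X] [tY : TopologicalSpace Y]
    (B : Set (X × Y)) : Prop :=
  ∃ (σ : TopologicalSpace X) (τ : TopologicalSpace Y),
    σ ≤ tX ∧ τ ≤ tY ∧ @PolishSpace X σ ∧ @PolishSpace Y τ ∧
      Γ (X × Y) (@instTopologicalSpaceProd X Y σ τ) B

/-- `A` is separable from `B` by a `pot(Γ)` set. -/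
def SepPot (Γ : SetClass) {X Y : Type} [TopologicalSpace X] [TopologicalSpace Y]
    (A B : Set (X × Y)) : Prop :=
  ∃ S : Set (X × Y), Potentially Γ S ∧ A ⊆ S ∧ Disjoint S B

def openClass : SetClass := fun Z t S => @IsOpen Z t S

def closedClass : SetClass := fun Z t S => @IsClosed Z t S

/-- the class `Σ^0_2` of countable unions of closed sets. -/
def sigma02Class : SetClass := fun Z t S =>
  ∃ F : ℕ → Set Z, (∀ n, @IsClosed Z t (F n)) ∧ S = ⋃ n, F n

/-- the class `Π^0_2` of countable intersections of open sets. -/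
def pi02Class : SetClass := fun Z t S =>
  ∃ U : ℕ → Set Z, (∀ n, @IsOpen Z t (U n)) ∧ S = ⋂ n, U n

/-- the class `Δ^0_2 = Σ^0_2 ∩ Π^0_2`. -/
def delta02Class : SetClass := fun Z t S => sigma02Class Z t S ∧ pi02Class Z t S

/-- the dual class `Ď` of complements of sets in `Γ`. -/
def dualClass (Γ : SetClass) : SetClass := fun Z t S => Γ Z t Sᶜ

def interClass (Γ Γ' : SetClass) : SetClass := fun Z t S => Γ Z t S ∧ Γ' Z t S

/-- standard parity of an ordinal: the parity of its finite part. -/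
def OrdEven (o : Ordinal.{0}) : Prop := Even (o % Ordinal.omega0)

/-- the difference set `D((O_θ)_{θ<η})`. -/
def DiffSet {Z : Type} (η : Ordinal.{0}) (O : Ordinal.{0} → Set Z) : Set Z :=
  {x | ∃ θ, θ < η ∧ (OrdEven θ ↔ ¬ OrdEven η) ∧ x ∈ O θ ∧ ∀ θ', θ' < θ → x ∉ O θ'}

/-- the class `D_η(Γ)` of `η`-differences of increasing sequences of sets in `Γ`. -/
def DClass (η : Ordinal.{0}) (Γ : SetClass) : SetClass := fun Z t S =>
  ∃ O : Ordinal.{0} → Set Z, (∀ θ, θ < η → Γ Z t (O θ)) ∧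
    (∀ θ₁ θ₂, θ₁ ≤ θ₂ → θ₂ < η → O θ₁ ⊆ O θ₂) ∧ S = DiffSet η O

/-- choice between a relation and its inverse. -/
def cSel {X : Type} (b : Bool) (C : Set (X × X)) : Set (X × X) :=
  if b then C else relInv C

/-- quasi-acyclicity of a relation on a Polish space. -/
def QuasiAcyclic {X : Type} [TopologicalSpace X] (A : Set (X × X)) : Prop :=
  ∃ C : ℕ → Set (X × X),
    (∀ n, Potentially closedClass (C n)) ∧
    (∀ m n, m ≠ n → Disjoint (C m) (C n)) ∧
    (⋃ n, C n) = A ∧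
    ∀ z₀ z₁ z₂ : X, (z₀, z₁) ∈ symmRel A → (z₁, z₂) ∈ symmRel A → z₀ ≠ z₂ →
      ∀ (k : ℕ) (nn : ℕ → ℕ) (ε : ℕ → Bool) (x y : ℕ → X), 1 ≤ k →
        (∀ i, 1 ≤ i → i ≤ k →
          x i ≠ z₀ ∧ x i ≠ z₁ ∧ x i ≠ z₂ ∧ y i ≠ z₀ ∧ y i ≠ z₁ ∧ y i ≠ z₂) →
        (z₀, x 1) ∈ cSel (ε 1) (C (nn 1)) →
        (z₂, y 1) ∈ cSel (ε 1) (C (nn 1)) →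
        (∀ i, 2 ≤ i → i ≤ k →
          (x (i - 1), x i) ∈ cSel (ε i) (C (nn i)) ∧
          (y (i - 1), y i) ∈ cSel (ε i) (C (nn i))) →
        x k ≠ y k

/-- `(X, Y, A, B) ⊑ (X', Y', A', B')` : reduction by a pair of injective continuous maps. -/
def Reducible {X Y X' Y' : Type} [TopologicalSpace X] [TopologicalSpace Y]
    [TopologicalSpace X'] [TopologicalSpace Y']
    (A B : Set (X × Y)) (A' B' : Set (X' × Y')) : Prop :=
  ∃ (f : X → X') (g : Y → Y'), Continuous f ∧ Continuous g ∧
    Function.Injective f ∧ Function.Injective g ∧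
    (∀ p ∈ A, (f p.1, g p.2) ∈ A') ∧ (∀ p ∈ B, (f p.1, g p.2) ∈ B')

/-- reduction via a square map `f × f`. -/
def SqReducible {X X' : Type} [TopologicalSpace X] [TopologicalSpace X']
    (A B : Set (X × X)) (A' B' : Set (X' × X')) : Prop :=
  ∃ f : X → X', Continuous f ∧ Function.Injective f ∧
    (∀ p ∈ A, (f p.1, f p.2) ∈ A') ∧ (∀ p ∈ B, (f p.1, f p.2) ∈ B')

/-- a set is `K_σ` if it is a countable union of compact sets. -/
def IsKSigma {Z : Type} [TopologicalSpace Z] (S : Set Z) : Prop :=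
  ∃ K : ℕ → Set Z, (∀ n, IsCompact (K n)) ∧ S = ⋃ n, K n

/-- Wadge classes of Borel sets. -/
def IsWadgeClassOfBorel (Γ : SetClass) : Prop :=
  ∃ A : Set Baire, IsBorel A ∧
    ∀ (Z : Type) [tZ : TopologicalSpace Z], PolishSpace Z → ZeroDimensional Z →
      ∀ S : Set Z, (Γ Z tZ S ↔ ∃ f : Z → Baire, Continuous f ∧ S = f ⁻¹' A)

/-- the Borel classes `Σ^0_ξ`, `ξ ≥ 1`. -/
inductive IsSigma0 : Ordinal.{0} → (Z : Type) → TopologicalSpace Z → Set Z → Prop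
  | base (Z : Type) (t : TopologicalSpace Z) (S : Set Z) :
      @IsOpen Z t S → IsSigma0 1 Z t S
  | iUnion (Z : Type) (t : TopologicalSpace Z) (ξ : Ordinal.{0}) (o : ℕ → Ordinal.{0})
      (f : ℕ → Set Z) : 1 < ξ → (∀ n, (1 : Ordinal.{0}) ≤ o n) → (∀ n, o n < ξ) →
      (∀ n, IsSigma0 (o n) Z t (f n)ᶜ) → IsSigma0 ξ Z t (⋃ n, f n)

/-- the family of classes `D_η(Σ^0_1)`, `Ď_η(Σ^0_1)` (`1 ≤ η < ω₁`), `D_n(Σ^0_2)`,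
`Ď_n(Σ^0_2)` (`1 ≤ n < ω`) and `Δ^0_2`. -/
def GammaFamily (Γ : SetClass) : Prop :=
  (∃ η : Ordinal.{0}, 1 ≤ η ∧ η.card ≤ Cardinal.aleph0 ∧ Γ = DClass η openClass) ∨
  (∃ η : Ordinal.{0}, 1 ≤ η ∧ η.card ≤ Cardinal.aleph0 ∧ Γ = dualClass (DClass η openClass)) ∨
  (∃ n : ℕ, 1 ≤ n ∧ Γ = DClass (n : Ordinal.{0}) sigma02Class) ∨
  (∃ n : ℕ, 1 ≤ n ∧ Γ = dualClass (DClass (n : Ordinal.{0}) sigma02Class)) ∨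
  Γ = delta02Class

/-- specification of the map `φ_η : ω^{<ω} → {-1} ∪ (η+1)`, where `none` codes `-1`. -/
def PhiSpec (η : Ordinal.{0}) (φ : List ℕ → Option Ordinal.{0}) : Prop :=
  φ [] = some η ∧
  (∀ s o, φ s = some o → o ≤ η) ∧
  (∀ s n, φ s = none → φ (s ++ [n]) = none) ∧
  (∀ s n, φ s = some 0 → φ (s ++ [n]) = none) ∧
  (∀ s θ n, φ s = some (θ + 1) → φ (s ++ [n]) = some θ) ∧
  (∀ s o, φ s = some o → Order.IsSuccLimit o →
    ∃ θf : ℕ → Ordinal.{0}, (∀ n, φ (s ++ [n]) = some (θf n)) ∧ StrictMono θf ∧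
      (∀ n, ¬ OrdEven (θf n)) ∧ ∀ β, β < o → ∃ n, β ≤ θf n)

/-- the prime coding `I(s) = p_0^{s(0)+1} ⋯ p_{|s|-1}^{s(|s|-1)+1}`, `I(∅) = 0`. -/
noncomputable def Ifun (s : List ℕ) : ℕ :=
  if s = [] then 0
  else ∏ i ∈ Finset.range s.length, (Nat.nth Nat.Prime i) ^ (s.getD i 0 + 1)

/-- the bijection `⟨·⟩_η : T_η → ω`, increasing with respect to `I`. -/
noncomputable def cEnum (φ : List ℕ → Option Ordinal.{0}) (s : List ℕ) : ℕ :=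
  Nat.card {t : List ℕ // φ t ≠ none ∧ Ifun t < Ifun s}

/-- the length-lexicographic enumeration `∅, 0, 1, 00, 01, 10, 11, …` of `2^{<ω}`. -/
def lexEnum (n : ℕ) : List Bool := ((n + 1).bits).dropLast.reverse

/-- the map `ψ` enumerating `∅, ∅, 0, 0, 1, 1, 00, 00, 01, 01, …`. -/
def psiFun (q : ℕ) : List Bool := lexEnum (q / 2)

noncomputable def tAux (φ : List ℕ → Option Ordinal.{0}) (ε : Bool) : List ℕ → List Bool
  | [] => []
  | q :: r =>
      tAux φ ε r ++ psiFun q ++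
        List.replicate
          (cEnum φ (r.reverse ++ [q]) - cEnum φ r.reverse - (psiFun q).length - 1) false ++
        [ε]

/-- the sequences `t^ε_s` for `s ∈ T_η`. -/
noncomputable def tSeq (φ : List ℕ → Option Ordinal.{0}) (ε : Bool) (s : List ℕ) : List Bool :=
  tAux φ ε s.reverse

/-- the concatenation `u ⌢ γ ∈ 2^ω` of a finite sequence with an infinite one. -/
def appendSeq (u : List Bool) (γ : Cantor) : Cantor :=
  fun n => if n < u.length then u.getD n false else γ (n - u.length)

/-- the sets `ℕ^η_ε = {(t^0_s ⌢ γ, t^1_s ⌢ γ) | s ∈ T_η, parity(|s|) = ε}`,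
where `ε = false` codes `0` and `ε = true` codes `1`. -/
noncomputable def NNset (φ : List ℕ → Option Ordinal.{0}) (ε : Bool) : Set (Cantor × Cantor) :=
  {p | ∃ (s : List ℕ) (γ : Cantor), φ s ≠ none ∧ (Even s.length ↔ ε = false) ∧
      p.1 = appendSeq (tSeq φ false s) γ ∧ p.2 = appendSeq (tSeq φ true s) γ}

/-- the sets `𝕊^η_ε = {(t^0_s ⌢ γ, t^1_s ⌢ γ) | s ∈ T_η \ {∅},
parity(|s|) = 1 - |parity(s(0)) - ε|}`. -/
noncomputable def SSset (φ : List ℕ → Option Ordinal.{0}) (ε : Bool) : Set (Cantor × Cantor) :=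
  {p | ∃ (s : List ℕ) (γ : Cantor), φ s ≠ none ∧ s ≠ [] ∧
      ((¬ Even s.length) ↔ (Even (s.headD 0) ↔ ε = false)) ∧
      p.1 = appendSeq (tSeq φ false s) γ ∧ p.2 = appendSeq (tSeq φ true s) γ}

/-- prepending a digit to an element of the Cantor space. -/
def consSeq (b : Bool) (α : Cantor) : Cantor := fun n => if n = 0 then b else α (n - 1)

/-- the relation `{(0⌢α, 1⌢β) | (α, β) ∈ A}`. -/
def prep01 (A : Set (Cantor × Cantor)) : Set (Cantor × Cantor) :=
  {p | ∃ q ∈ A, p.1 = consSeq false q.1 ∧ p.2 = consSeq true q.2}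

/-- the sets `𝔹^η_ε = {(0⌢α, 1⌢β) | (α, β) ∈ ℕ^η_ε}`. -/
noncomputable def BBset (φ : List ℕ → Option Ordinal.{0}) (ε : Bool) : Set (Cantor × Cantor) :=
  prep01 (NNset φ ε)

/-- the sets `ℂ^η_ε = {(0⌢α, 1⌢β) | (α, β) ∈ 𝕊^η_ε}`. -/
noncomputable def CCset (φ : List ℕ → Option Ordinal.{0}) (ε : Bool) : Set (Cantor × Cantor) :=
  prep01 (SSset φ ε)

/-- the initial segment `α | l` of `α ∈ 2^ω`. -/
def listInit (α : Cantor) (l : ℕ) : List Bool := (List.range l).map α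

/-- frames, generating trees on `2 × 2`. -/
def IsFrame (F : ℕ → List Bool × List Bool) : Prop :=
  (∀ l : ℕ, (F l).1.length = l ∧ (F l).2.length = l) ∧
  (∀ p q : ℕ, ∀ w : List Bool, ∃ N : ℕ,
      (∃ l : ℕ, F l =
        ((F q).1 ++ false :: (w ++ List.replicate N false),
         (F q).2 ++ true :: (w ++ List.replicate N false))) ∧
      (((F q).1.length + 1 + w.length + N) - 1).unpair.1 = p) ∧
  (∀ l : ℕ, 0 < l → ∃ q : ℕ, q < l ∧ ∃ w : List Bool,
      (F l).1 = (F q).1 ++ false :: w ∧ (F l).2 = (F q).2 ++ true :: w)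

/-- the tree on `2 × 2` generated by a frame. -/
def frameTree (F : ℕ → List Bool × List Bool) : Set (List Bool × List Bool) :=
  {p | p.1.length = p.2.length ∧
      (p.1 = [] ∨ ∃ (q : ℕ) (w : List Bool),
        p.1 = (F q).1 ++ false :: w ∧ p.2 = (F q).2 ++ true :: w)}

/-- the body `⌈T⌉` of a tree on `2 × 2`. -/
def treeBody (T : Set (List Bool × List Bool)) : Set (Cantor × Cantor) :=
  {p | ∀ l : ℕ, (listInit p.1 l, listInit p.2 l) ∈ T}

/-- the equivalence relation `𝔼_0` of eventual agreement. -/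
def E0rel : Set (Cantor × Cantor) := {p | ∃ m : ℕ, ∀ n, m < n → p.1 n = p.2 n}

/-- the sets `𝔼^ε_0`. -/
def E0par (ε : ℕ) : Set (Cantor × Cantor) :=
  {p | ∃ m : ℕ, 0 < m ∧ p.1 m ≠ p.2 m ∧ (∀ n, m < n → p.1 n = p.2 n) ∧
      (m - 1).unpair.1 % 2 = ε}

/-- the shift map `S : 2^ω → 2^ω`. -/
def shiftSeq (α : Cantor) : Cantor := fun m => α (m + 1)

/-- the symmetric difference of two elements of `2^ω`. -/
def xorSeq (α β : Cantor) : Cantor := fun m => xor (α m) (β m)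

/-- the set `C_0` of eventually null sequences. -/
def Czero : Set Cantor := {α | ∃ m : ℕ, ∀ p, m ≤ p → α p = false}

/-- the sets `C_θ` built from a surjection `S` onto `η`. -/
def CTheta (S : ℕ → Ordinal.{0}) : Ordinal.{0} → Set Cantor := fun θ =>
  if θ = 0 then Czero
  else {α | ∃ m : ℕ, (∀ p : ℕ, α (Nat.pair m p) = false) ∧ S (Nat.unpair m).1 ≤ θ}

/-- the set `D_η = D((C_θ)_{θ<η})`. -/
def DEtaSet (η : Ordinal.{0}) (S : ℕ → Ordinal.{0}) : Set Cantor := DiffSet η (CTheta S)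

/-- the set `ℕ_n = {(α, β) ∈ ⌈T⌉ | S(α Δ β) ∉ D_n}`. -/
def NDn (F : ℕ → List Bool × List Bool) (n : ℕ) (Sn : ℕ → ℕ) : Set (Cantor × Cantor) :=
  {p | p ∈ treeBody (frameTree F) ∧
      shiftSeq (xorSeq p.1 p.2) ∉ DEtaSet (n : Ordinal.{0}) (fun m => (Sn m : Ordinal.{0}))}
section Aux

open Topology Filter

/-- cylinder agreement set -/
def Agr (k : ℕ) (x : Cantor) : Set Cantor := {z | ∀ n, n < k → z n = x n}

lemma isOpen_Agr (k : ℕ) (x : Cantor) : IsOpen (Agr k x) := by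
  have : Agr k x = ⋂ n ∈ Finset.range k, {z : Cantor | z n = x n} := by
    ext z; simp [Agr]
  rw [this]
  refine isOpen_biInter_finset fun n _ => ?_
  have : {z : Cantor | z n = x n} = (fun z : Cantor => z n) ⁻¹' {x n} := rfl
  rw [this]
  exact (isOpen_discrete _).preimage (continuous_apply n)

lemma exists_cyl_subset {U : Set Cantor} (hU : IsOpen U) {x : Cantor} (hx : x ∈ U) :
    ∃ k, Agr k x ⊆ U := by
  obtain ⟨I, u, hI, hsub⟩ := isOpen_pi_iff.mp hU x hx
  refine ⟨(I.sup id) + 1, fun z hz => hsub fun a ha => ?_⟩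
  have : z a = x a := hz a (Nat.lt_succ_of_le (Finset.le_sup (f := id) ha))
  rw [this]; exact (hI a ha).2

lemma exists_cyl_subset₂ {U : Set (Cantor × Cantor)} (hU : IsOpen U) {x y : Cantor}
    (hx : (x, y) ∈ U) : ∃ k, ∀ z w : Cantor, z ∈ Agr k x → w ∈ Agr k y → (z, w) ∈ U := by
  obtain ⟨u, v, hu, hv, hxu, hyv, hsub⟩ := isOpen_prod_iff.mp hU x y hx
  obtain ⟨k1, h1⟩ := exists_cyl_subset hu hxu
  obtain ⟨k2, h2⟩ := exists_cyl_subset hv hyv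
  refine ⟨max k1 k2, fun z w hz hw => hsub ⟨h1 fun n hn => hz n (lt_of_lt_of_le hn (le_max_left _ _)),
    h2 fun n hn => hw n (lt_of_lt_of_le hn (le_max_right _ _))⟩⟩

lemma appendSeq_lt {u : List Bool} {γ : Cantor} {n : ℕ} (h : n < u.length) :
    appendSeq u γ n = u.getD n false := by simp [appendSeq, h]

lemma appendSeq_ge {u : List Bool} {γ : Cantor} {n : ℕ} (h : u.length ≤ n) :
    appendSeq u γ n = γ (n - u.length) := by simp [appendSeq, Nat.not_lt.mpr h]

lemma listInit_length (α : Cantor) (l : ℕ) : (listInit α l).length = l := by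
  simp [listInit]

lemma listInit_get (α : Cantor) {l n : ℕ} (h : n < l) :
    (listInit α l).getD n false = α n := by
  have h' : n < (listInit α l).length := by rwa [listInit_length]
  rw [List.getD_eq_getElem _ _ h']
  simp [listInit]

lemma listInit_eq_take {α : Cantor} {u : List Bool}
    (h : ∀ n, n < l → α n = u.getD n false) (hl : l ≤ u.length) :
    listInit α l = u.take l := by
  apply List.ext_getElem
  · simp [listInit_length, hl]
  · intro n h1 h2
    have hn : n < l := by simpa [listInit_length] using h1
    have := h n hn
    simp only [listInit, List.getElem_map, List.getElem_range]
    rw [this, List.getElem_take, List.getD_eq_getElem _ _ (lt_of_lt_of_le hn hl)]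

lemma listInit_appendSeq_le {u : List Bool} {γ : Cantor} {l : ℕ} (h : l ≤ u.length) :
    listInit (appendSeq u γ) l = u.take l := by
  refine listInit_eq_take (fun n hn => appendSeq_lt (lt_of_lt_of_le hn h)) h

lemma listInit_appendSeq_ge {u : List Bool} {γ : Cantor} {l : ℕ} (h : u.length ≤ l) :
    listInit (appendSeq u γ) l = u ++ listInit γ (l - u.length) := by
  apply List.ext_getElem
  · simp [listInit_length, Nat.add_sub_cancel' h]
  · intro n h1 h2
    have hn : n < l := by simpa [listInit_length] using h1
    simp only [listInit, List.getElem_map, List.getElem_range]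
    rcases lt_or_ge n u.length with hc | hc
    · rw [List.getElem_append_left hc, appendSeq]
      simp [hc, List.getD_eq_getElem _ _ hc]
    · rw [List.getElem_append_right hc, appendSeq]
      simp [Nat.not_lt.mpr hc, List.getElem_map, List.getElem_range]

end Aux
section Frame

lemma take_node_le {u w : List Bool} {b : Bool} {j : ℕ} (hj : j ≤ u.length) :
    List.take j (u ++ b :: w) = List.take j u := by
  rw [List.take_append, Nat.sub_eq_zero_of_le hj, List.take_zero,
    List.append_nil]

lemma take_node {u w : List Bool} {b : Bool} {q j : ℕ} (hu : u.length = q) (hq : q < j) :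
    List.take j (u ++ b :: w) = u ++ b :: List.take (j - q - 1) w := by
  set i := j - q - 1 with hi
  have h2 : j - q = i + 1 := by omega
  rw [List.take_append, List.take_of_length_le (by omega), hu, h2,
    List.take_succ_cons]

variable {F : ℕ → List Bool × List Bool}

lemma flen1 (hF : IsFrame F) (q : ℕ) : (F q).1.length = q := (hF.1 q).1
lemma flen2 (hF : IsFrame F) (q : ℕ) : (F q).2.length = q := (hF.1 q).2

lemma node_mem (hF : IsFrame F) (q : ℕ) (w : List Bool) :
    ((F q).1 ++ false :: w, (F q).2 ++ true :: w) ∈ frameTree F :=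
  ⟨by simp [flen1 hF, flen2 hF], Or.inr ⟨q, w, rfl, rfl⟩⟩

lemma frame_take (hF : IsFrame F) :
    ∀ l j, j ≤ l → (List.take j (F l).1, List.take j (F l).2) ∈ frameTree F := by
  intro l
  induction l using Nat.strong_induction_on with
  | _ l IH =>
    intro j hj
    rcases Nat.eq_zero_or_pos l with rfl | hl
    · have : j = 0 := Nat.le_zero.mp hj
      subst this
      exact ⟨by simp, Or.inl (by simp)⟩
    obtain ⟨q, hq, w, h1, h2⟩ := hF.2.2 l hl
    rcases le_or_gt j q with hc | hc
    · have e1 : List.take j (F l).1 = List.take j (F q).1 := by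
        rw [h1, take_node_le (by rw [flen1 hF]; exact hc)]
      have e2 : List.take j (F l).2 = List.take j (F q).2 := by
        rw [h2, take_node_le (by rw [flen2 hF]; exact hc)]
      rw [e1, e2]
      exact IH q hq j hc
    · rw [h1, h2, take_node (flen1 hF q) hc, take_node (flen2 hF q) hc]
      exact node_mem hF q _

lemma tree_take (hF : IsFrame F) {p : List Bool × List Bool} (hp : p ∈ frameTree F) (j : ℕ) :
    (p.1.take j, p.2.take j) ∈ frameTree F := by
  obtain ⟨hlen, h | ⟨q, w, h1, h2⟩⟩ := hp
  · have h2 : p.2 = [] := by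
      have : p.2.length = 0 := by rw [← hlen, h]; rfl
      exact List.length_eq_zero_iff.mp this
    refine ⟨by rw [h, h2], Or.inl (by rw [h]; simp)⟩
  · rcases le_or_gt j q with hc | hc
    · have e1 : List.take j p.1 = List.take j (F q).1 := by
        rw [h1, take_node_le (by rw [flen1 hF]; exact hc)]
      have e2 : List.take j p.2 = List.take j (F q).2 := by
        rw [h2, take_node_le (by rw [flen2 hF]; exact hc)]
      rw [e1, e2]
      exact frame_take hF q j hc
    · rw [h1, h2, take_node (flen1 hF q) hc, take_node (flen2 hF q) hc]
      exact node_mem hF q _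

lemma node_body (hF : IsFrame F) (q : ℕ) (w : List Bool) (γ : Cantor) :
    (appendSeq ((F q).1 ++ false :: w) γ, appendSeq ((F q).2 ++ true :: w) γ)
      ∈ treeBody (frameTree F) ∩ E0rel := by
  set a := (F q).1 ++ false :: w with ha
  set b := (F q).2 ++ true :: w with hb
  have hla : a.length = q + 1 + w.length := by simp [ha, flen1 hF]; omega
  have hlb : b.length = q + 1 + w.length := by simp [hb, flen2 hF]; omega
  have hab : a.length = b.length := by rw [hla, hlb]
  constructor
  · intro l
    dsimp only
    rcases le_or_gt l a.length with hc | hc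
    · rw [listInit_appendSeq_le hc, listInit_appendSeq_le (hab ▸ hc)]
      exact tree_take hF (node_mem hF q w) l
    · rw [listInit_appendSeq_ge hc.le, listInit_appendSeq_ge (by omega : b.length ≤ l), hab]
      have e1 : a ++ listInit γ (l - b.length) =
          (F q).1 ++ false :: (w ++ listInit γ (l - b.length)) := by simp [ha]
      have e2 : b ++ listInit γ (l - b.length) =
          (F q).2 ++ true :: (w ++ listInit γ (l - b.length)) := by simp [hb]
      rw [e1, e2]
      exact node_mem hF q _
  · refine ⟨a.length, fun n hn => ?_⟩
    dsimp only
    rw [appendSeq_ge hn.le, appendSeq_ge (by omega : b.length ≤ n), hla, hlb]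

end Frame
section Fine

open Topology Filter

lemma finer_open_borel {X : Type} (t σ : TopologicalSpace X)
    (hle : σ ≤ t) (hσ : @PolishSpace X σ) (ht : @PolishSpace X t)
    (V : Set X) (hV : @IsOpen X σ V) :
    @MeasurableSet X (@borel X t) V := by
  letI := t
  haveI : PolishSpace X := ht
  letI : MeasurableSpace X := borel X
  haveI : BorelSpace X := ⟨rfl⟩
  have M : @MeasurableSet X (@borel X σ) V :=
    MeasurableSpace.measurableSet_generateFrom hV
  have cont : @ContinuousOn X X σ _ id V :=
    @Continuous.continuousOn X X σ _ id V (continuous_id_of_le hle)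
  have key :=
    @MeasurableSet.image_of_continuousOn_injOn X X _ _ _ V id _ σ hσ (@borel X σ)
      (@BorelSpace.mk X σ (@borel X σ) rfl) M cont (injOn_id V)
  simpa using key

lemma finer_polish_agree {X : Type} (t σ : TopologicalSpace X)
    (hle : σ ≤ t) (hσ : @PolishSpace X σ) (ht : @PolishSpace X t) :
    ∃ G : Set X, G ∈ @residual X t ∧
      ∀ V : Set X, @IsOpen X σ V → ∃ W : Set X, @IsOpen X t W ∧ V ∩ G = W ∩ G := by
  letI := t
  haveI : PolishSpace X := ht
  letI : MeasurableSpace X := borel X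
  haveI : BorelSpace X := ⟨rfl⟩
  obtain ⟨B, hBct, -, hBbasis⟩ := @TopologicalSpace.exists_countable_basis X σ
    hσ.toSecondCountableTopology
  have hBor : ∀ V ∈ B, ∃ W : Set X, IsOpen W ∧ V =ᵇ W := by
    intro V hV
    have : MeasurableSet V :=
      finer_open_borel t σ hle hσ ht V (@TopologicalSpace.IsTopologicalBasis.isOpen X σ V B hBbasis hV)
    exact this.residualEq_isOpen
  choose W hWopen hWeq using hBor
  refine ⟨⋂ V, ⋂ (hV : V ∈ B), {x | x ∈ V ↔ x ∈ W V hV}, ?_, ?_⟩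
  · exact (countable_bInter_mem hBct).mpr fun V hV =>
      Filter.eventuallyEq_set.mp (hWeq V hV)
  · intro V hVopen
    have hcover : V = ⋃₀ {s | s ∈ B ∧ s ⊆ V} :=
      @TopologicalSpace.IsTopologicalBasis.open_eq_sUnion' X σ B hBbasis V hVopen
    refine ⟨⋃ b, ⋃ (h : b ∈ B ∧ b ⊆ V), W b h.1,
      isOpen_iUnion fun b => isOpen_iUnion fun h => hWopen b h.1, ?_⟩
    ext x
    simp only [Set.mem_inter_iff, Set.mem_iUnion, Set.mem_iInter, Set.mem_setOf_eq]
    constructor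
    · rintro ⟨hxV, hxG⟩
      rw [hcover] at hxV
      obtain ⟨b, ⟨hbB, hbV⟩, hxb⟩ := hxV
      exact ⟨⟨b, ⟨hbB, hbV⟩, (hxG b hbB).mp hxb⟩, hxG⟩
    · rintro ⟨⟨b, ⟨hbB, hbV⟩, hxW⟩, hxG⟩
      exact ⟨hbV ((hxG b hbB).mpr hxW), hxG⟩

end Fine
section Dense

open Topology Filter

lemma residual_seq {G : Set Cantor} (hG : G ∈ residual Cantor) :
    ∃ g : ℕ → Set Cantor, (∀ n, IsOpen (g n)) ∧ (∀ n, Dense (g n)) ∧ (⋂ n, g n) ⊆ G := by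
  obtain ⟨S, hSo, hSd, hSc, hSsub⟩ := mem_residual_iff.mp hG
  obtain ⟨f, hf⟩ := (hSc.insert Set.univ).exists_eq_range (Set.insert_nonempty _ _)
  have hmem : ∀ n, f n ∈ insert Set.univ S := fun n => hf ▸ Set.mem_range_self n
  refine ⟨f, fun n => ?_, fun n => ?_, ?_⟩
  · rcases hmem n with h | h
    · rw [h]; exact isOpen_univ
    · exact hSo _ h
  · rcases hmem n with h | h
    · rw [h]; exact dense_univ
    · exact hSd _ h
  · intro x hx
    refine hSsub fun s hs => ?_
    have : s ∈ Set.range f := by rw [← hf]; exact Set.mem_insert_of_mem _ hs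
    obtain ⟨n, rfl⟩ := this
    exact Set.mem_iInter.mp hx n

lemma continuous_appendSeq (u : List Bool) : Continuous (appendSeq u) := by
  refine continuous_pi fun n => ?_
  rcases lt_or_ge n u.length with h | h
  · have : (fun γ : Cantor => appendSeq u γ n) = fun _ => u.getD n false := by
      funext γ; exact appendSeq_lt h
    rw [this]; exact continuous_const
  · have : (fun γ : Cantor => appendSeq u γ n) = fun γ => γ (n - u.length) := by
      funext γ; exact appendSeq_ge h
    rw [this]; exact continuous_apply _

lemma isOpen_append (u : List Bool) {D : Set Cantor} (hD : IsOpen D) :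
    IsOpen {γ : Cantor | appendSeq u γ ∈ D} :=
  hD.preimage (continuous_appendSeq u)

lemma dense_append (u : List Bool) {D : Set Cantor} (hD : Dense D) :
    Dense {γ : Cantor | appendSeq u γ ∈ D} := by
  rw [dense_iff_inter_open]
  rintro U hU ⟨γ0, hγ0⟩
  obtain ⟨k, hk⟩ := exists_cyl_subset hU hγ0
  have hne : (Agr (u.length + k) (appendSeq u γ0) ∩ D).Nonempty :=
    (dense_iff_inter_open.mp hD) _ (isOpen_Agr _ _) ⟨appendSeq u γ0, fun n _ => rfl⟩
  obtain ⟨x, hxA, hxD⟩ := hne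
  set γ : Cantor := fun n => x (n + u.length) with hγ
  have c1 : appendSeq u γ = x := by
    funext n
    rcases lt_or_ge n u.length with h | h
    · rw [appendSeq_lt h, hxA n (by omega), appendSeq_lt h]
    · rw [appendSeq_ge h, hγ]
      simp only
      rw [Nat.sub_add_cancel h]
  have c2 : γ ∈ Agr k γ0 := by
    intro n hn
    rw [hγ]
    simp only
    rw [hxA (n + u.length) (by omega), appendSeq_ge (by omega)]
    congr 1
    omega
  exact ⟨γ, hk c2, by rw [Set.mem_setOf_eq, c1]; exact hxD⟩

end Dense
lemma prefix_getD {u u' : List Bool} (h : u <+: u') {i : ℕ} (hi : i < u.length) :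
    u'.getD i false = u.getD i false := by
  rw [List.getD_eq_getElem _ _ hi, List.getD_eq_getElem _ _ (lt_of_lt_of_le hi h.length_le)]
  exact (List.IsPrefix.getElem h hi).symm

lemma getD_concat_len {u : List Bool} {x : Bool} : (u ++ [x]).getD u.length false = x := by
  rw [List.getD_eq_getElem _ _ (by simp)]
  exact List.getElem_concat_length rfl _
section Package

lemma rect_point {X Y : Type} [tX : TopologicalSpace X] [tY : TopologicalSpace Y]
    (σ : TopologicalSpace X) (τ : TopologicalSpace Y)
    {G : Set X} {H : Set Y} {U : Set (X × Y)}
    (hGagree : ∀ V : Set X, @IsOpen X σ V → ∃ W, @IsOpen X tX W ∧ V ∩ G = W ∩ G)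
    (hHagree : ∀ V : Set Y, @IsOpen Y τ V → ∃ W, @IsOpen Y tY W ∧ V ∩ H = W ∩ H)
    (hU : @IsOpen (X × Y) (@instTopologicalSpaceProd X Y σ τ) U)
    {p : X × Y} (hp : p ∈ U) (h1 : p.1 ∈ G) (h2 : p.2 ∈ H) :
    ∃ R : Set (X × Y), @IsOpen (X × Y) (@instTopologicalSpaceProd X Y tX tY) R ∧ p ∈ R ∧
      ∀ q ∈ R, q.1 ∈ G → q.2 ∈ H → q ∈ U := by
  obtain ⟨V, V', hV, hV', hxV, hyV', hVsub⟩ :=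
    (@isOpen_prod_iff X Y σ τ U).mp hU p.1 p.2 hp
  obtain ⟨W1, hW1o, hW1e⟩ := hGagree V hV
  obtain ⟨W2, hW2o, hW2e⟩ := hHagree V' hV'
  refine ⟨W1 ×ˢ W2, @IsOpen.prod X Y tX tY W1 W2 hW1o hW2o, ⟨?_, ?_⟩, ?_⟩
  · exact (Set.ext_iff.mp hW1e p.1 |>.mp ⟨hxV, h1⟩).1
  · exact (Set.ext_iff.mp hW2e p.2 |>.mp ⟨hyV', h2⟩).1
  · rintro q ⟨hq1, hq2⟩ hq1G hq2H
    exact hVsub ⟨(Set.ext_iff.mp hW1e q.1 |>.mpr ⟨hq1, hq1G⟩).1,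
      (Set.ext_iff.mp hW2e q.2 |>.mpr ⟨hq2, hq2H⟩).1⟩

lemma rect_union {X Y : Type} [tX : TopologicalSpace X] [tY : TopologicalSpace Y]
    {G : Set X} {H : Set Y} {A : Set (X × Y)}
    (hA : ∀ p ∈ A, p.1 ∈ G → p.2 ∈ H →
      ∃ R : Set (X × Y), IsOpen R ∧ p ∈ R ∧ ∀ q ∈ R, q.1 ∈ G → q.2 ∈ H → q ∈ A) :
    ∃ W : Set (X × Y), IsOpen W ∧ (∀ p ∈ A, p.1 ∈ G → p.2 ∈ H → p ∈ W) ∧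
      ∀ q ∈ W, q.1 ∈ G → q.2 ∈ H → q ∈ A := by
  classical
  choose! R hRo hRmem hRsub using hA
  refine ⟨⋃ p ∈ {p : X × Y | p ∈ A ∧ p.1 ∈ G ∧ p.2 ∈ H}, R p,
    isOpen_biUnion fun p hp => hRo p hp.1 hp.2.1 hp.2.2, ?_, ?_⟩
  · intro p hp h1 h2
    exact Set.mem_biUnion ⟨hp, h1, h2⟩ (hRmem p hp h1 h2)
  · intro q hq hq1 hq2
    obtain ⟨p, hpB, hqR⟩ := Set.mem_iUnion₂.mp hq
    exact hRsub p hpB.1 hpB.2.1 hpB.2.2 q hqR hq1 hq2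


lemma pot_pi02_package {S : Set (Cantor × Cantor)} (hpot : Potentially pi02Class S) :
    ∃ (G H : Set Cantor) (W : ℕ → Set (Cantor × Cantor)),
      G ∈ residual Cantor ∧ H ∈ residual Cantor ∧ (∀ n, IsOpen (W n)) ∧
      (∀ p ∈ S, p.1 ∈ G → p.2 ∈ H → ∀ n, p ∈ W n) ∧
      ∀ p : Cantor × Cantor, p.1 ∈ G → p.2 ∈ H → (∀ n, p ∈ W n) → p ∈ S := by
  obtain ⟨σ, τ, hσle, hτle, hσpol, hτpol, UU, hUopen, hSeq⟩ := hpot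
  obtain ⟨G, hGres, hGagree⟩ := finer_polish_agree _ σ hσle hσpol (by letI := PiNat.metricSpaceOfDiscreteUniformity (E := fun _ : ℕ => Bool) (fun _ => rfl); infer_instance)
  obtain ⟨H, hHres, hHagree⟩ := finer_polish_agree _ τ hτle hτpol (by letI := PiNat.metricSpaceOfDiscreteUniformity (E := fun _ : ℕ => Bool) (fun _ => rfl); infer_instance)
  have key := fun n : ℕ =>
    @rect_union Cantor Cantor Pi.topologicalSpace Pi.topologicalSpace G H (UU n)
      (fun p hp h1 h2 =>
        @rect_point Cantor Cantor Pi.topologicalSpace Pi.topologicalSpace σ τ G H (UU n)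
          hGagree hHagree (hUopen n) p hp h1 h2)
  choose W hWo hWmem hWsub using key
  refine ⟨G, H, W, hGres, hHres, hWo, ?_, ?_⟩
  · intro p hpS h1 h2 n
    refine hWmem n p ?_ h1 h2
    rw [hSeq] at hpS
    exact Set.mem_iInter.mp hpS n
  · intro p h1 h2 hpW
    rw [hSeq]
    exact Set.mem_iInter.mpr fun n => hWsub n p (hpW n) h1 h2

end Package
/-- for `T` the tree on `2 × 2` generated by a frame, `⌈T⌉ ∩ 𝔼_0` is not
separable from `⌈T⌉ ∖ 𝔼_0` by a `pot(Π^0_2)` set. -/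
theorem statement15 (F : ℕ → List Bool × List Bool) (hF : IsFrame F) :
    ¬ SepPot pi02Class (treeBody (frameTree F) ∩ E0rel)
        (treeBody (frameTree F) \ E0rel) := by
  rintro ⟨S, hpot, hsub, hdisj⟩
  obtain ⟨G, H, W, hGres, hHres, hWo, hWmem, hWsub⟩ := pot_pi02_package hpot
  obtain ⟨g, hgo, hgd, hgsub⟩ := residual_seq hGres
  obtain ⟨h, hho, hhd, hhsub⟩ := residual_seq hHres
  -- the step lemma
  have step : ∀ q n : ℕ, ∃ q' : ℕ, q < q' ∧
      ((F q).1 ++ [false]) <+: (F q').1 ∧ ((F q).2 ++ [true]) <+: (F q').2 ∧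
      ∀ z : Cantor × Cantor,
        (∀ i, i < q' + 1 → z.1 i = ((F q').1 ++ [false]).getD i false) →
        (∀ i, i < q' + 1 → z.2 i = ((F q').2 ++ [true]).getD i false) →
        z ∈ W n ∩ (g n ×ˢ h n) := by
    intro q n
    set s : List Bool := (F q).1 ++ [false] with hs
    set t : List Bool := (F q).2 ++ [true] with ht
    have hls : s.length = q + 1 := by simp [hs, flen1 hF]
    have hlt : t.length = q + 1 := by simp [ht, flen2 hF]
    -- pick a generic γ
    set fam : ℕ × Bool → Set Cantor := fun mb =>
      if mb.2 then {γ : Cantor | appendSeq s γ ∈ g mb.1}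
      else {γ : Cantor | appendSeq t γ ∈ h mb.1} with hfam
    have hfamo : ∀ mb, IsOpen (fam mb) := by
      rintro ⟨m, b⟩
      cases b
      · simpa [hfam] using isOpen_append t (hho m)
      · simpa [hfam] using isOpen_append s (hgo m)
    have hfamd : ∀ mb, Dense (fam mb) := by
      rintro ⟨m, b⟩
      cases b
      · simpa [hfam] using dense_append t (hhd m)
      · simpa [hfam] using dense_append s (hgd m)
    obtain ⟨γ, hγ⟩ := (dense_iInter_of_isOpen hfamo hfamd).nonempty
    have hγg : ∀ m, appendSeq s γ ∈ g m := fun m => by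
      have := Set.mem_iInter.mp hγ (m, true); simpa [hfam] using this
    have hγh : ∀ m, appendSeq t γ ∈ h m := fun m => by
      have := Set.mem_iInter.mp hγ (m, false); simpa [hfam] using this
    set x : Cantor := appendSeq s γ with hx
    set y : Cantor := appendSeq t γ with hy
    have hxyT : (x, y) ∈ treeBody (frameTree F) ∩ E0rel := node_body hF q [] γ
    have hxG : x ∈ G := hgsub (Set.mem_iInter.mpr hγg)
    have hyH : y ∈ H := hhsub (Set.mem_iInter.mpr hγh)
    have hxyS : (x, y) ∈ S := hsub hxyT
    have hxyW : (x, y) ∈ W n ∩ (g n ×ˢ h n) :=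
      ⟨hWmem (x, y) hxyS hxG hyH n, hγg n, hγh n⟩
    obtain ⟨k, hk⟩ := exists_cyl_subset₂ ((hWo n).inter ((hgo n).prod (hho n))) hxyW
    set K : ℕ := max k (q + 2) with hK
    have hKk : k ≤ K := le_max_left _ _
    have hKq : q + 2 ≤ K := le_max_right _ _
    -- extend to a frame node
    set v : List Bool := listInit γ (K - (q + 1)) with hv
    have hvlen : v.length = K - (q + 1) := listInit_length _ _
    obtain ⟨N, ⟨l, hFl⟩, -⟩ := hF.2.1 0 q v
    have hFl1 : (F l).1 = (F q).1 ++ false :: (v ++ List.replicate N false) := by rw [hFl]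
    have hFl2 : (F l).2 = (F q).2 ++ true :: (v ++ List.replicate N false) := by rw [hFl]
    have hllen : l = q + 1 + (v.length + N) := by
      have h1 := flen1 hF l
      rw [hFl1] at h1
      simp [flen1 hF] at h1
      omega
    have hKl : K ≤ l := by omega
    have hql : q < l := by omega
    -- prefixes
    have hpre1 : s ++ v <+: (F l).1 := by
      refine ⟨List.replicate N false, ?_⟩
      rw [hFl1, hs]
      simp [List.append_assoc]
    have hpre2 : t ++ v <+: (F l).2 := by
      refine ⟨List.replicate N false, ?_⟩
      rw [hFl2, ht]
      simp [List.append_assoc]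
    have hsvlen : (s ++ v).length = K := by
      simp [hls, hvlen]; omega
    have htvlen : (t ++ v).length = K := by
      simp [hlt, hvlen]; omega
    -- listInit of x, y at K
    have hxK : listInit x K = s ++ v := by
      rw [hx, listInit_appendSeq_ge (by omega : s.length ≤ K), hls, hv]
    have hyK : listInit y K = t ++ v := by
      rw [hy, listInit_appendSeq_ge (by omega : t.length ≤ K), hlt, hv]
    refine ⟨l, hql, ?_, ?_, ?_⟩
    · exact (List.prefix_append s v).trans hpre1
    · exact (List.prefix_append t v).trans hpre2
    · intro z hz1 hz2
      refine hk z.1 z.2 (fun i hi => ?_) (fun i hi => ?_)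
      · rw [hz1 i (by omega),
          prefix_getD (hpre1.trans (List.prefix_append _ _)) (by rw [hsvlen]; omega),
          ← hxK]
        exact listInit_get x (by omega : i < K)
      · rw [hz2 i (by omega),
          prefix_getD (hpre2.trans (List.prefix_append _ _)) (by rw [htvlen]; omega),
          ← hyK]
        exact listInit_get y (by omega : i < K)
  clear hsub
  choose f hf1 hf2 hf3 hf4 using step
  set Q : ℕ → ℕ := fun n => Nat.rec 0 (fun m q => f q m) n with hQ
  have hQs : ∀ n, Q (n + 1) = f (Q n) n := fun n => rfl
  set a : ℕ → List Bool := fun n => (F (Q n)).1 ++ [false] with ha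
  set b : ℕ → List Bool := fun n => (F (Q n)).2 ++ [true] with hb
  have halen : ∀ n, (a n).length = Q n + 1 := fun n => by simp [ha, flen1 hF]
  have hblen : ∀ n, (b n).length = Q n + 1 := fun n => by simp [hb, flen2 hF]
  have hQmono : ∀ n, Q n < Q (n + 1) := fun n => by rw [hQs]; exact hf1 (Q n) n
  have hQge : ∀ n, n ≤ Q n := by
    intro n
    induction n with
    | zero => exact Nat.zero_le _
    | succ n ih => have := hQmono n; omega
  have hachain : ∀ n, a n <+: a (n + 1) := by
    intro n
    have h2 := hf2 (Q n) n
    rw [← hQs n] at h2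
    exact h2.trans (List.prefix_append _ _)
  have hbchain : ∀ n, b n <+: b (n + 1) := by
    intro n
    have h2 := hf3 (Q n) n
    rw [← hQs n] at h2
    exact h2.trans (List.prefix_append _ _)
  have hachainle : ∀ m n, m ≤ n → a m <+: a n := by
    intro m n hmn
    induction n, hmn using Nat.le_induction with
    | base => exact List.prefix_refl _
    | succ n hmn ih => exact ih.trans (hachain n)
  have hbchainle : ∀ m n, m ≤ n → b m <+: b n := by
    intro m n hmn
    induction n, hmn using Nat.le_induction with
    | base => exact List.prefix_refl _
    | succ n hmn ih => exact ih.trans (hbchain n)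
  set α : Cantor := fun i => (a (i + 1)).getD i false with hα
  set β : Cantor := fun i => (b (i + 1)).getD i false with hβ
  have hilena : ∀ i, i < (a (i + 1)).length := fun i => by
    have h1 := halen (i + 1); have := hQge (i + 1); omega
  have hilenb : ∀ i, i < (b (i + 1)).length := fun i => by
    have h1 := hblen (i + 1); have := hQge (i + 1); omega
  have hconsa : ∀ n i, i < (a n).length → α i = (a n).getD i false := by
    intro n i hi
    rcases le_total n (i + 1) with hc | hc
    · exact prefix_getD (hachainle n (i + 1) hc) hi
    · exact (prefix_getD (hachainle (i + 1) n hc) (hilena i)).symm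
  have hconsb : ∀ n i, i < (b n).length → β i = (b n).getD i false := by
    intro n i hi
    rcases le_total n (i + 1) with hc | hc
    · exact prefix_getD (hbchainle n (i + 1) hc) hi
    · exact (prefix_getD (hbchainle (i + 1) n hc) (hilenb i)).symm
  have hOpn : ∀ n, (α, β) ∈ W n ∩ (g n ×ˢ h n) := by
    intro n
    have h4 := hf4 (Q n) n
    rw [← hQs n] at h4
    exact h4 (α, β) (fun i hi => hconsa (n + 1) i (by have := halen (n + 1); omega))
      (fun i hi => hconsb (n + 1) i (by have := hblen (n + 1); omega))
  have hbody : (α, β) ∈ treeBody (frameTree F) := by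
    intro j
    have hj1 : j ≤ (a j).length := by have := halen j; have := hQge j; omega
    have hj2 : j ≤ (b j).length := by have := hblen j; have := hQge j; omega
    have e1 : listInit α j = (a j).take j :=
      listInit_eq_take (fun i hij => hconsa j i (lt_of_lt_of_le hij hj1)) hj1
    have e2 : listInit β j = (b j).take j :=
      listInit_eq_take (fun i hij => hconsb j i (lt_of_lt_of_le hij hj2)) hj2
    show (listInit α j, listInit β j) ∈ frameTree F
    rw [e1, e2]
    exact tree_take hF (node_mem hF (Q j) []) j
  have hnE0 : (α, β) ∉ E0rel := by
    rintro ⟨m, hm⟩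
    have hq : m < Q (m + 1) := lt_of_lt_of_le (Nat.lt_succ_self m) (hQge (m + 1))
    have hαv : α (Q (m + 1)) = false := by
      have h0 : ((F (Q (m + 1))).1 ++ [false]).getD ((F (Q (m + 1))).1.length) false = false :=
        getD_concat_len
      rw [flen1 hF] at h0
      have h1 := hconsa (m + 1) (Q (m + 1)) (by have := halen (m + 1); have := hQmono m; omega)
      rw [h1]
      exact h0
    have hβv : β (Q (m + 1)) = true := by
      have h0 : ((F (Q (m + 1))).2 ++ [true]).getD ((F (Q (m + 1))).2.length) false = true :=
        getD_concat_len
      rw [flen2 hF] at h0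
      have h1 := hconsb (m + 1) (Q (m + 1)) (by have := hblen (m + 1); have := hQmono m; omega)
      rw [h1]
      exact h0
    have hh2 : α (Q (m + 1)) = β (Q (m + 1)) := hm (Q (m + 1)) hq
    rw [hαv, hβv] at hh2
    exact Bool.false_ne_true hh2
  have hSmem : (α, β) ∈ S := by
    have hG' : α ∈ G := hgsub (Set.mem_iInter.mpr fun n => (hOpn n).2.1)
    have hH' : β ∈ H := hhsub (Set.mem_iInter.mpr fun n => (hOpn n).2.2)
    exact hWsub (α, β) hG' hH' fun n => (hOpn n).1
  exact Set.disjoint_left.mp hdisj hSmem ⟨hbody, hnE0⟩
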